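/- Let ι be a countable index set and d : ι → ℝ a function such that d i ≥ c₀ for all i ∈ ι, for some constant c₀ > 0. Assume there exists C > 0 such that for every r ≥ 0 the set {i ∈ ι : d i ≤ r} is finite with cardinality at most C·exp(C·r). Then for every c > 0 there exist constants c' > 0 and C' > 0 such that for all t > 0 the family i ↦ exp(−c·(d i)²/t) is summable and ∑_{i ∈ ι} exp(−c·(d i)²/t) ≤ C'·exp(−c'/t + C'·t). -/

import Mathlib

set_option maxHeartbeats 1000000


/-- Let `ι` be a countable index set and `d : ι → ℝ` with `d i ≥ c₀ > 0`.  Assume there is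
`C > 0` such that for every `r ≥ 0` the sublevel set `{i | d i ≤ r}` is finite with cardinality
at most `C · exp (C·r)`.  Then for every `c > 0` there are `c' > 0` and `C' > 0` such that for
all `t > 0` the family `i ↦ exp (−c·(d i)²/t)` is summable with sum at most
`C' · exp (−c'/t + C'·t)`. -/
theorem summable_exp_of_counting_bound
    {ι : Type*} [Countable ι] (d : ι → ℝ) (c₀ : ℝ) (hc₀ : 0 < c₀)
    (hd : ∀ i, c₀ ≤ d i) (C : ℝ) (hC : 0 < C)
    (hcount : ∀ r : ℝ, 0 ≤ r → {i : ι | d i ≤ r}.Finite ∧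
      ({i : ι | d i ≤ r}.ncard : ℝ) ≤ C * Real.exp (C * r)) :
    ∀ c : ℝ, 0 < c → ∃ c' > (0 : ℝ), ∃ C' > (0 : ℝ), ∀ t : ℝ, 0 < t →
      Summable (fun i : ι => Real.exp (-c * (d i) ^ 2 / t)) ∧
      ∑' i : ι, Real.exp (-c * (d i) ^ 2 / t) ≤ C' * Real.exp (-c' / t + C' * t) := by
  classical
  intro c hc
  set c' : ℝ := c * c₀ ^ 2 / 2 with hc'def
  set C' : ℝ := C * Real.exp C * (1 + 2 / c) + C ^ 2 / (2 * c) + 1 with hC'def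
  have hc'pos : 0 < c' := by positivity
  have hC'pos : 0 < C' := by positivity
  refine ⟨c', hc'pos, C', hC'pos, ?_⟩
  intro t ht
  -- auxiliary shell-counting series on ℕ
  set h : ℕ → ℝ := fun n => C * Real.exp (C * (c₀ + n + 1)) * Real.exp (-c * (c₀ + n) ^ 2 / t)
    with hhdef
  have hhnonneg : ∀ n, 0 ≤ h n := fun n => by positivity
  set r : ℝ := Real.exp (-(c / (2 * t))) with hrdef
  have hr0 : 0 ≤ r := (Real.exp_pos _).le
  have hr1 : r < 1 := by
    rw [hrdef, Real.exp_lt_one_iff]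
    have : (0:ℝ) < c / (2 * t) := by positivity
    linarith
  set A : ℝ := C * Real.exp (C + C ^ 2 * t / (2 * c) - c' / t) with hAdef
  -- termwise domination of `h` by a geometric series
  have hle : ∀ n : ℕ, h n ≤ A * r ^ n := by
    intro n
    have hnn : (n : ℝ) ≤ (n : ℝ) ^ 2 := by
      rcases Nat.eq_zero_or_pos n with h0 | h1
      · simp [h0]
      · have h1' : (1:ℝ) ≤ (n:ℝ) := by exact_mod_cast h1
        nlinarith
    have key : C * (c₀ + n + 1) + -c * (c₀ + n) ^ 2 / t
        ≤ (C + C ^ 2 * t / (2 * c) - c' / t) + (n : ℝ) * -(c / (2 * t)) := by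
      rw [← sub_nonneg]
      have expand : ((C + C ^ 2 * t / (2 * c) - c' / t) + (n : ℝ) * -(c / (2 * t)))
          - (C * (c₀ + n + 1) + -c * (c₀ + n) ^ 2 / t)
          = ((C * t - c * (c₀ + (n:ℝ))) ^ 2
              + c ^ 2 * ((c₀ + (n:ℝ)) ^ 2 - c₀ ^ 2 - (n:ℝ))) / (2 * c * t) := by
        rw [hc'def]
        field_simp
        ring
      rw [expand]
      have hnum2 : (0:ℝ) ≤ (c₀ + (n:ℝ)) ^ 2 - c₀ ^ 2 - (n:ℝ) := by
        have hn0 : (0:ℝ) ≤ (n:ℝ) := Nat.cast_nonneg n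
        nlinarith
      have hnum : (0:ℝ) ≤ (C * t - c * (c₀ + (n:ℝ))) ^ 2
          + c ^ 2 * ((c₀ + (n:ℝ)) ^ 2 - c₀ ^ 2 - (n:ℝ)) := by
        nlinarith [sq_nonneg (C * t - c * (c₀ + (n:ℝ)))]
      positivity
    calc h n = C * Real.exp (C * (c₀ + n + 1) + -c * (c₀ + n) ^ 2 / t) := by
          rw [hhdef, Real.exp_add]; ring
      _ ≤ C * Real.exp ((C + C ^ 2 * t / (2 * c) - c' / t) + (n : ℝ) * -(c / (2 * t))) :=
          mul_le_mul_of_nonneg_left (Real.exp_le_exp.mpr key) hC.le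
      _ = A * r ^ n := by
          rw [hAdef, hrdef, Real.exp_add, Real.exp_nat_mul]; ring
  have hgs : Summable (fun n : ℕ => A * r ^ n) :=
    (summable_geometric_of_lt_one hr0 hr1).mul_left A
  have hsummh : Summable h := Summable.of_nonneg_of_le hhnonneg hle hgs
  -- bound on the tsum of h
  have htsumh : ∑' n, h n ≤ A * (1 - r)⁻¹ := by
    calc ∑' n, h n ≤ ∑' n, A * r ^ n := Summable.tsum_le_tsum hle hsummh hgs
      _ = A * (1 - r)⁻¹ := by rw [tsum_mul_left, tsum_geometric_of_lt_one hr0 hr1]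
  -- geometric factor bound
  have hα : (0:ℝ) < c / (2 * t) := by positivity
  have hrle : r ≤ (1 + c / (2 * t))⁻¹ := by
    rw [hrdef, Real.exp_neg]
    exact inv_anti₀ (by linarith) (by linarith [Real.add_one_le_exp (c / (2 * t))])
  have h1r : c / (2 * t) / (1 + c / (2 * t)) ≤ 1 - r := by
    have e : 1 - (1 + c / (2 * t))⁻¹ = c / (2 * t) / (1 + c / (2 * t)) := by
      field_simp
      ring
    linarith [hrle, e.ge]
  have h1rpos : (0:ℝ) < 1 - r := by linarith
  have hinv : (1 - r)⁻¹ ≤ 1 + 2 * t / c := by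
    have := inv_anti₀ (div_pos hα (by linarith)) h1r
    have e2 : (c / (2 * t) / (1 + c / (2 * t)))⁻¹ = 1 + 2 * t / c := by
      field_simp
      ring
    linarith [e2 ▸ this]
  have hApos : 0 < A := by rw [hAdef]; positivity
  have hgfac : 1 + 2 * t / c ≤ (1 + 2 / c) * Real.exp t := by
    have h1 : (1:ℝ) ≤ Real.exp t := Real.one_le_exp ht.le
    have h2 : t ≤ Real.exp t := by linarith [Real.add_one_le_exp t]
    have h3 : 2 * t / c = (2 / c) * t := by ring
    have h4 : (2 / c) * t ≤ (2 / c) * Real.exp t :=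
      mul_le_mul_of_nonneg_left h2 (by positivity)
    nlinarith
  -- final bound
  have hfinal : A * (1 - r)⁻¹ ≤ C' * Real.exp (-c' / t + C' * t) := by
    have step : A * (1 - r)⁻¹ ≤ A * ((1 + 2 / c) * Real.exp t) :=
      mul_le_mul_of_nonneg_left (le_trans hinv hgfac) hApos.le
    refine le_trans step ?_
    have e : A * ((1 + 2 / c) * Real.exp t)
        = (C * Real.exp C * (1 + 2 / c)) * Real.exp (C ^ 2 * t / (2 * c) - c' / t + t) := by
      rw [hAdef, show C + C ^ 2 * t / (2 * c) - c' / t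
            = C + (C ^ 2 * t / (2 * c) - c' / t) by ring, Real.exp_add,
          show C ^ 2 * t / (2 * c) - c' / t + t
            = (C ^ 2 * t / (2 * c) - c' / t) + t by ring, Real.exp_add]
      ring
    rw [e]
    have hcoef : C * Real.exp C * (1 + 2 / c) ≤ C' := by
      rw [hC'def]
      have : (0:ℝ) < C ^ 2 / (2 * c) := by positivity
      linarith
    have hexparg : C ^ 2 * t / (2 * c) - c' / t + t ≤ -c' / t + C' * t := by
      have hC'ge : C ^ 2 / (2 * c) + 1 ≤ C' := by
        rw [hC'def]
        have : (0:ℝ) < C * Real.exp C * (1 + 2 / c) := by positivity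
        linarith
      have e2 : C ^ 2 * t / (2 * c) + t ≤ C' * t := by
        calc C ^ 2 * t / (2 * c) + t = (C ^ 2 / (2 * c) + 1) * t := by ring
          _ ≤ C' * t := mul_le_mul_of_nonneg_right hC'ge ht.le
      have e3 : -c' / t = -(c' / t) := by ring
      rw [e3]
      linarith
    exact mul_le_mul hcoef (Real.exp_le_exp.mpr hexparg) (Real.exp_pos _).le hC'pos.le
  -- bound any finite partial sum of the original family by ∑' h
  have key : ∀ s : Finset ι, ∑ i ∈ s, Real.exp (-c * d i ^ 2 / t) ≤ ∑' n, h n := by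
    intro s
    set f : ι → ℕ := fun i => ⌊d i - c₀⌋₊ with hfdef
    have hfd : ∀ i, (c₀ + (f i : ℝ)) ≤ d i := by
      intro i
      have := Nat.floor_le (show (0:ℝ) ≤ d i - c₀ by linarith [hd i])
      simp only [hfdef]
      linarith
    have hfd2 : ∀ i, d i ≤ c₀ + (f i : ℝ) + 1 := by
      intro i
      have := Nat.lt_floor_add_one (d i - c₀)
      simp only [hfdef]
      linarith
    calc ∑ i ∈ s, Real.exp (-c * d i ^ 2 / t)
        ≤ ∑ i ∈ s, Real.exp (-c * (c₀ + (f i : ℝ)) ^ 2 / t) := by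
          refine Finset.sum_le_sum fun i _ => ?_
          apply Real.exp_le_exp.mpr
          have hsq : (c₀ + (f i : ℝ)) ^ 2 ≤ d i ^ 2 :=
            pow_le_pow_left₀ (by positivity) (hfd i) 2
          exact (div_le_div_iff_of_pos_right ht).mpr (by nlinarith)
      _ = ∑ n ∈ s.image f, (s.filter fun i => f i = n).card
            • Real.exp (-c * (c₀ + (n : ℝ)) ^ 2 / t) :=
          Finset.sum_comp (fun n : ℕ => Real.exp (-c * (c₀ + (n : ℝ)) ^ 2 / t)) f
      _ ≤ ∑ n ∈ s.image f, h n := by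
          refine Finset.sum_le_sum fun n _ => ?_
          rw [nsmul_eq_mul]
          obtain ⟨hfin, hcard⟩ := hcount (c₀ + n + 1) (by positivity)
          have hsub : ↑(s.filter fun i => f i = n) ⊆ {i : ι | d i ≤ c₀ + n + 1} := by
            intro i hi
            simp only [Finset.coe_filter, Set.mem_setOf_eq, Finset.mem_filter] at hi ⊢
            obtain ⟨-, hfi⟩ := hi
            have := hfd2 i
            rw [hfi] at this
            exact this
          have hle2 : ((s.filter fun i => f i = n).card : ℝ)
              ≤ C * Real.exp (C * (c₀ + n + 1)) := by
            have hn := Set.ncard_le_ncard hsub hfin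
            rw [Set.ncard_coe_finset] at hn
            exact le_trans (Nat.cast_le.mpr hn) hcard
          calc ((s.filter fun i => f i = n).card : ℝ) * Real.exp (-c * (c₀ + (n : ℝ)) ^ 2 / t)
              ≤ C * Real.exp (C * (c₀ + n + 1)) * Real.exp (-c * (c₀ + (n : ℝ)) ^ 2 / t) :=
                mul_le_mul_of_nonneg_right hle2 (Real.exp_pos _).le
            _ = h n := by rw [hhdef]
      _ ≤ ∑' n, h n := Summable.sum_le_tsum _ (fun n _ => hhnonneg n) hsummh
  have hsumm : Summable (fun i : ι => Real.exp (-c * d i ^ 2 / t)) :=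
    summable_of_sum_le (fun i => (Real.exp_pos _).le) key
  refine ⟨hsumm, ?_⟩
  exact le_trans (Summable.tsum_le_of_sum_le hsumm key) (le_trans htsumh hfinal)
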